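/- Let a, b₁, b₂, γ be positive reals, c ≠ 0 a real parameter, j a natural number, and ω > 0 a real number with h(ω²) = 0 and h′(ω²) ≠ 0; set τ* = τ^{(j)}(ω). If λ : ℝ → ℂ is differentiable on a neighborhood of τ* with λ(τ*) = iω and Δ_{c,τ}(λ(τ)) = 0 for all τ in that neighborhood, then the derivative of Re λ(τ) at τ = τ* is nonzero and has the same sign as h′(ω²). -/

import Mathlib

noncomputable section

open Real

/-- A = b₁+b₂+2a -/
def Ac (a b1 b2 : ℝ) : ℝ := b1 + b2 + 2*a
/-- B = 2a(b₁+b₂)+a²+b₁b₂+2γ -/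
def Bc (a b1 b2 γ : ℝ) : ℝ := 2*a*(b1+b2) + a^2 + b1*b2 + 2*γ
/-- C = (a+b₁)(ab₂+γ)+(a+b₂)(ab₁+γ) -/
def Cc (a b1 b2 γ : ℝ) : ℝ := (a+b1)*(a*b2+γ) + (a+b2)*(a*b1+γ)
/-- D = (ab₁+γ)(ab₂+γ) -/
def Dc (a b1 b2 γ : ℝ) : ℝ := (a*b1+γ)*(a*b2+γ)
/-- P = A² − 2B -/
def Pc (a b1 b2 γ : ℝ) : ℝ := (Ac a b1 b2)^2 - 2*(Bc a b1 b2 γ)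
/-- Q = B² + 2D − 2AC − c⁴ -/
def Qc (a b1 b2 γ c : ℝ) : ℝ :=
  (Bc a b1 b2 γ)^2 + 2*(Dc a b1 b2 γ) - 2*(Ac a b1 b2)*(Cc a b1 b2 γ) - c^4
/-- R = C² − 2BD − c⁴(b₁²+b₂²) -/
def Rc (a b1 b2 γ c : ℝ) : ℝ :=
  (Cc a b1 b2 γ)^2 - 2*(Bc a b1 b2 γ)*(Dc a b1 b2 γ) - c^4*(b1^2+b2^2)
/-- S = D² − c⁴b₁²b₂² -/
def Sc (a b1 b2 γ c : ℝ) : ℝ := (Dc a b1 b2 γ)^2 - c^4*b1^2*b2^2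
/-- h(z) = z⁴ + Pz³ + Qz² + Rz + S -/
def hq (a b1 b2 γ c z : ℝ) : ℝ :=
  z^4 + Pc a b1 b2 γ*z^3 + Qc a b1 b2 γ c*z^2 + Rc a b1 b2 γ c*z + Sc a b1 b2 γ c
/-- h′(z) = 4z³ + 3Pz² + 2Qz + R -/
def hq' (a b1 b2 γ c z : ℝ) : ℝ :=
  4*z^3 + 3*(Pc a b1 b2 γ)*z^2 + 2*(Qc a b1 b2 γ c)*z + Rc a b1 b2 γ c
/-- The characteristic function Δ_{c,τ}(λ) of the linearization at the trivial equilibrium. -/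
def charFun (a b1 b2 γ c τ : ℝ) (lam : ℂ) : ℂ :=
  (lam^2 + (a+b1 : ℝ)*lam + (a*b1+γ : ℝ)) * (lam^2 + (a+b2 : ℝ)*lam + (a*b2+γ : ℝ))
    - (c^2 : ℝ) * (lam + (b1 : ℝ)) * (lam + (b2 : ℝ)) * Complex.exp ((-2) * lam * (τ : ℝ))
/-- N(ω) = c²[(b₁+b₂)²ω² + (ω²−b₁b₂)²] -/
def Nfun (b1 b2 c ω : ℝ) : ℝ := c^2*((b1+b2)^2*ω^2 + (ω^2 - b1*b2)^2)
/-- a*(ω) -/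
def aStar (a b1 b2 γ c ω : ℝ) : ℝ :=
  ((ω^4 - Bc a b1 b2 γ*ω^2 + Dc a b1 b2 γ)*(b1+b2)*ω
    + (Ac a b1 b2*ω^3 - Cc a b1 b2 γ*ω)*(b1*b2 - ω^2)) / Nfun b1 b2 c ω
/-- b*(ω) -/
def bStar (a b1 b2 γ c ω : ℝ) : ℝ :=
  ((ω^4 - Bc a b1 b2 γ*ω^2 + Dc a b1 b2 γ)*(b1*b2 - ω^2)
    + (-(Ac a b1 b2)*ω^3 + Cc a b1 b2 γ*ω)*(b1+b2)*ω) / Nfun b1 b2 c ω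
/-- the critical delays τ^{(j)}(ω) -/
def tauJ (a b1 b2 γ c : ℝ) (j : ℕ) (ω : ℝ) : ℝ :=
  if 0 ≤ aStar a b1 b2 γ c ω then
    (1/(2*ω)) * (Real.arccos (bStar a b1 b2 γ c ω) + 2*(j:ℝ)*Real.pi)
  else
    (1/(2*ω)) * (2*Real.pi - Real.arccos (bStar a b1 b2 γ c ω) + 2*(j:ℝ)*Real.pi)

set_option maxHeartbeats 1000000 in
/-- transversality: any differentiable branch of characteristic roots
through iω at τ* = τ^{(j)}(ω) crosses the imaginary axis with nonzero speed, and the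
sign of d(Re λ)/dτ at τ* agrees with the sign of h′(ω²). -/
theorem stmt9 (a b1 b2 γ c : ℝ)
    (ha : 0 < a) (hb1 : 0 < b1) (hb2 : 0 < b2) (hγ : 0 < γ) (hc : c ≠ 0)
    (j : ℕ) (ω : ℝ) (hω : 0 < ω)
    (hroot : hq a b1 b2 γ c (ω^2) = 0) (hroot' : hq' a b1 b2 γ c (ω^2) ≠ 0)
    (lamf : ℝ → ℂ) (s : Set ℝ) (hs : s ∈ nhds (tauJ a b1 b2 γ c j ω))
    (hdiff : ∀ τ ∈ s, DifferentiableAt ℝ lamf τ)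
    (hval : lamf (tauJ a b1 b2 γ c j ω) = Complex.I * (ω : ℂ))
    (hsol : ∀ τ ∈ s, charFun a b1 b2 γ c τ (lamf τ) = 0) :
    deriv (fun τ => (lamf τ).re) (tauJ a b1 b2 γ c j ω) ≠ 0 ∧
    0 < deriv (fun τ => (lamf τ).re) (tauJ a b1 b2 γ c j ω) * hq' a b1 b2 γ c (ω^2) := by
  set τs := tauJ a b1 b2 γ c j ω with hτdef
  have hτs : τs ∈ s := mem_of_mem_nhds hs
  set L : ℂ := deriv lamf τs with hLdef
  have hL : HasDerivAt lamf L τs := (hdiff τs hτs).hasDerivAt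
  -- derivative of the real part
  have hLre : HasDerivAt (fun t => (lamf t).re) L.re τs := by
    exact Complex.reCLM.hasFDerivAt.comp_hasDerivAt τs hL
  rw [hLre.deriv]
  -- build the derivative of τ ↦ Δ_{c,τ}(λ(τ))
  have hid : HasDerivAt (fun t : ℝ => (t : ℂ)) 1 τs := by
    exact Complex.ofRealCLM.hasDerivAt
  have hsq : HasDerivAt (fun t => lamf t^2) (2*lamf τs*L) τs := by
    have h2 := hL.mul hL
    simp only [← pow_two] at h2
    convert h2 using 1
    · rfl
    · funext t; simp [pow_two]
    · ring
  have hq1 : HasDerivAt (fun t => lamf t^2 + ((a+b1:ℝ):ℂ)*lamf t + ((a*b1+γ:ℝ):ℂ))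
      (2*lamf τs*L + ((a+b1:ℝ):ℂ)*L) τs :=
    (hsq.add (hL.const_mul ((a+b1:ℝ):ℂ))).add_const ((a*b1+γ:ℝ):ℂ)
  have hq2 : HasDerivAt (fun t => lamf t^2 + ((a+b2:ℝ):ℂ)*lamf t + ((a*b2+γ:ℝ):ℂ))
      (2*lamf τs*L + ((a+b2:ℝ):ℂ)*L) τs :=
    (hsq.add (hL.const_mul ((a+b2:ℝ):ℂ))).add_const ((a*b2+γ:ℝ):ℂ)
  have hprod := hq1.mul hq2
  have hlin : HasDerivAt (fun t => ((c^2:ℝ):ℂ) * (lamf t + ((b1:ℝ):ℂ)) * (lamf t + ((b2:ℝ):ℂ)))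
      (((c^2:ℝ):ℂ)*L * (lamf τs + ((b2:ℝ):ℂ)) + ((c^2:ℝ):ℂ)*(lamf τs + ((b1:ℝ):ℂ)) * L) τs := by
    have h3 := (((hL.add_const ((b1:ℝ):ℂ)).const_mul ((c^2:ℝ):ℂ)).mul (hL.add_const ((b2:ℝ):ℂ)))
    convert h3 using 1
    · rfl
    · funext t; rfl
  have hexp : HasDerivAt (fun t => Complex.exp ((-2) * lamf t * ((t:ℝ):ℂ)))
      (Complex.exp ((-2) * lamf τs * (τs:ℂ)) * ((-2)*L*(τs:ℂ) + (-2)*lamf τs)) τs := by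
    have h4 := (((hL.const_mul ((-2):ℂ))).mul hid).cexp
    convert h4 using 1
    · rfl
    · simp only [Pi.mul_apply]
      ring
  have hFd := hprod.sub (hlin.mul hexp)
  have hFd' : HasDerivAt (fun t => charFun a b1 b2 γ c t (lamf t)) _ τs := hFd
  have heq : (fun t => charFun a b1 b2 γ c t (lamf t)) =ᶠ[nhds τs] (fun _ => (0:ℂ)) :=
    Filter.eventuallyEq_of_mem hs hsol
  have hE := hFd'.deriv.symm.trans (heq.deriv_eq.trans (deriv_const τs 0))
  rw [hval] at hE
  have hRoot := hsol τs hτs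
  rw [hval] at hRoot
  simp only [charFun] at hRoot
  set iw : ℂ := Complex.I * (ω : ℂ) with hiw
  set P1 : ℂ := iw^2 + ((a+b1:ℝ):ℂ)*iw + ((a*b1+γ:ℝ):ℂ) with hP1
  set P2 : ℂ := iw^2 + ((a+b2:ℝ):ℂ)*iw + ((a*b2+γ:ℝ):ℂ) with hP2
  set Qv : ℂ := (iw + ((b1:ℝ):ℂ)) * (iw + ((b2:ℝ):ℂ)) with hQv
  set dQv : ℂ := 2*iw + ((b1:ℝ):ℂ) + ((b2:ℝ):ℂ) with hdQv
  set dPv : ℂ := (2*iw + ((a+b1:ℝ):ℂ))*P2 + P1*(2*iw + ((a+b2:ℝ):ℂ)) with hdPv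
  set Kv : ℂ := dPv*Qv - P1*P2*dQv + 2*(τs:ℂ)*P1*P2*Qv with hKv
  -- key complex relation from implicit differentiation
  have hKey : L * Kv = (-2)*iw*(P1*P2)*Qv := by
    rw [hKv, hdPv, hdQv, hQv, hP2, hP1]
    linear_combination ((iw + ((b1:ℝ):ℂ)) * (iw + ((b2:ℝ):ℂ))) * hE
      - ((2*iw + ((b1:ℝ):ℂ) + ((b2:ℝ):ℂ))*L
         + ((iw + ((b1:ℝ):ℂ)) * (iw + ((b2:ℝ):ℂ)))*(-2*L*(τs:ℂ) - 2*iw)) * hRoot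
  -- nonvanishing facts
  have hiwb1 : iw + ((b1:ℝ):ℂ) ≠ 0 := by
    intro h
    have := congrArg Complex.re h
    simp [hiw] at this
    exact absurd this (ne_of_gt hb1)
  have hiwb2 : iw + ((b2:ℝ):ℂ) ≠ 0 := by
    intro h
    have := congrArg Complex.re h
    simp [hiw] at this
    exact absurd this (ne_of_gt hb2)
  have hQvne : Qv ≠ 0 := by rw [hQv]; exact mul_ne_zero hiwb1 hiwb2
  have hPvne : P1 * P2 ≠ 0 := by
    have h5 : P1 * P2 = ((c^2:ℝ):ℂ) * (iw + ((b1:ℝ):ℂ)) * (iw + ((b2:ℝ):ℂ))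
        * Complex.exp ((-2) * iw * (τs:ℂ)) := by linear_combination hRoot
    rw [h5]
    exact mul_ne_zero (mul_ne_zero (mul_ne_zero
      (by exact_mod_cast pow_ne_zero 2 hc) hiwb1) hiwb2) (Complex.exp_ne_zero _)
  have hiwne : iw ≠ 0 := by
    rw [hiw]
    exact mul_ne_zero Complex.I_ne_zero (by exact_mod_cast ne_of_gt hω)
  have hwne : (-2)*iw*(P1*P2)*Qv ≠ 0 :=
    mul_ne_zero (mul_ne_zero (mul_ne_zero (by norm_num) hiwne) hPvne) hQvne
  have hKne : Kv ≠ 0 := by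
    intro h
    rw [h, mul_zero] at hKey
    exact hwne hKey.symm
  -- real part of L times |Kv|²
  have hre : L.re * Complex.normSq Kv
      = ((-2)*iw*(P1*P2)*Qv).re * Kv.re + ((-2)*iw*(P1*P2)*Qv).im * Kv.im := by
    have h6 : L.re * Complex.normSq Kv = (L*Kv).re * Kv.re + (L*Kv).im * Kv.im := by
      simp only [Complex.mul_re, Complex.mul_im, Complex.normSq_apply]
      ring
    rw [h6, hKey]
  -- the big real identity
  have hbig : ((-2)*iw*(P1*P2)*Qv).re * Kv.re + ((-2)*iw*(P1*P2)*Qv).im * Kv.im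
      = 2*ω^2*Complex.normSq Qv * hq' a b1 b2 γ c (ω^2) := by
    rw [hKv, hdPv, hdQv, hQv, hP2, hP1, hiw]
    simp only [hq, hq', Pc, Qc, Rc, Sc, Ac, Bc, Cc, Dc] at hroot ⊢
    simp only [pow_two, Complex.mul_re, Complex.mul_im, Complex.add_re, Complex.add_im,
      Complex.sub_re, Complex.sub_im, Complex.I_re, Complex.I_im, Complex.ofReal_re,
      Complex.ofReal_im, Complex.normSq_apply, Complex.neg_re, Complex.neg_im,
      Complex.re_ofNat, Complex.im_ofNat]
    linear_combination (-2*ω^2*(b1^2+b2^2+2*ω^2)) * hroot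
  have hfin : L.re * Complex.normSq Kv = 2*ω^2*Complex.normSq Qv * hq' a b1 b2 γ c (ω^2) :=
    hre.trans hbig
  -- conclude
  have hKpos : 0 < Complex.normSq Kv := Complex.normSq_pos.2 hKne
  have hQpos : 0 < Complex.normSq Qv := Complex.normSq_pos.2 hQvne
  have hsqpos : 0 < hq' a b1 b2 γ c (ω^2) ^ 2 :=
    lt_of_le_of_ne (sq_nonneg _) (Ne.symm (pow_ne_zero 2 hroot'))
  have hrhs : 0 < 2*ω^2*Complex.normSq Qv * hq' a b1 b2 γ c (ω^2) ^ 2 := by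
    have h7 : 0 < 2*ω^2*Complex.normSq Qv := by positivity
    exact mul_pos h7 hsqpos
  have hpp : 0 < (L.re * hq' a b1 b2 γ c (ω^2)) * Complex.normSq Kv := by
    have h8 : (L.re * hq' a b1 b2 γ c (ω^2)) * Complex.normSq Kv
        = 2*ω^2*Complex.normSq Qv * hq' a b1 b2 γ c (ω^2) ^ 2 := by
      linear_combination hq' a b1 b2 γ c (ω^2) * hfin
    rw [h8]
    exact hrhs
  have hfinal : 0 < L.re * hq' a b1 b2 γ c (ω^2) := by
    rcases mul_pos_iff.mp hpp with ⟨h, _⟩ | ⟨_, h⟩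
    · exact h
    · linarith
  refine ⟨?_, hfinal⟩
  intro h0
  rw [h0, zero_mul] at hfinal
  exact lt_irrefl 0 hfinal
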